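/- arXiv:1407.3838 — 5 statements merged into one kernel-verified Lean document; each statement's English description precedes it below -/
import Mathlib

section
/- For every x > 0 there exists exactly one real number y ≠ x lying on the tangent line to the graph of the hill function at (x, h(x)), i.e. satisfying h(y) = h(x) + h′(x)·(y − x); moreover this unique y is negative. -/
/-- The hill function `h(x) = arccos(tanh x)`. -/
noncomputable def hill (x : ℝ) : ℝ := Real.arccos (Real.tanh x)

/-- The derivative of the hill function: `h'(x) = -1/cosh x`. -/
noncomputable def hill' (x : ℝ) : ℝ := -1 / Real.cosh x

open Real Set

lemma abs_sinh_lt_cosh (x : ℝ) : |Real.sinh x| < Real.cosh x := by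
  nlinarith [Real.cosh_sq x, Real.cosh_pos x, abs_nonneg (Real.sinh x),
    sq_abs (Real.sinh x)]

lemma abs_tanh_lt_one (x : ℝ) : |Real.tanh x| < 1 := by
  rw [Real.tanh_eq_sinh_div_cosh, abs_div, abs_of_pos (Real.cosh_pos x),
    div_lt_one (Real.cosh_pos x)]
  exact abs_sinh_lt_cosh x

lemma hasDerivAt_tanh' (x : ℝ) : HasDerivAt Real.tanh (1 / Real.cosh x ^ 2) x := by
  have hc : Real.cosh x ≠ 0 := (Real.cosh_pos x).ne'
  have h := (Real.hasDerivAt_sinh x).div (Real.hasDerivAt_cosh x) hc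
  have hfun : Real.tanh = fun y => Real.sinh y / Real.cosh y :=
    funext fun y => Real.tanh_eq_sinh_div_cosh y
  rw [hfun]
  refine (h.congr_deriv ?_ : HasDerivAt (fun y => Real.sinh y / Real.cosh y) _ x)
  have h1 : Real.cosh x ^ 2 - Real.sinh x ^ 2 = 1 := Real.cosh_sq_sub_sinh_sq x
  rw [← h1]
  ring

lemma hill_hasDerivAt (x : ℝ) : HasDerivAt hill (hill' x) x := by
  have hb := _root_.abs_tanh_lt_one x
  rw [abs_lt] at hb
  have ht1 : Real.tanh x ≠ 1 := ne_of_lt hb.2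
  have ht2 : Real.tanh x ≠ -1 := ne_of_gt hb.1
  have ha := (Real.hasDerivAt_arccos ht2 ht1).comp x (hasDerivAt_tanh' x)
  have hc : Real.cosh x ≠ 0 := (Real.cosh_pos x).ne'
  have h1 : 1 - Real.tanh x ^ 2 = 1 / Real.cosh x ^ 2 := by
    rw [Real.tanh_eq_sinh_div_cosh]
    field_simp
    exact Real.cosh_sq_sub_sinh_sq x
  have h2 : Real.sqrt (1 - Real.tanh x ^ 2) = 1 / Real.cosh x := by
    rw [h1, one_div, one_div, Real.sqrt_inv, Real.sqrt_sq (Real.cosh_pos x).le]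
  have : -(1 / Real.sqrt (1 - Real.tanh x ^ 2)) * (1 / Real.cosh x ^ 2) = hill' x := by
    rw [h2, hill']
    field_simp
  rw [← this]
  exact ha

/-- For every `x > 0`, the tangent line to the graph of the hill function at `(x, h x)`
meets the graph in exactly one other point `(y, h y)` with `y ≠ x`, and this
unique `y` is negative. -/
theorem hill_tangent_second_intersection {x : ℝ} (hx : 0 < x) :
    ∃ y : ℝ, (y ≠ x ∧ hill y = hill x + hill' x * (y - x)) ∧ y < 0 ∧
      ∀ z : ℝ, z ≠ x → hill z = hill x + hill' x * (z - x) → z = y := by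
  set g : ℝ → ℝ := fun y => hill y - (hill x + hill' x * (y - x)) with hgdef
  have hg : ∀ y, HasDerivAt g (hill' y - hill' x) y := by
    intro y
    have h1 : HasDerivAt (fun y => hill x + hill' x * (y - x)) (hill' x) y := by
      simpa using (((hasDerivAt_id y).sub_const x).const_mul (hill' x)).const_add (hill x)
    exact (hill_hasDerivAt y).sub h1
  have hgcont : Continuous g :=
    continuous_iff_continuousAt.mpr fun y => (hg y).continuousAt
  have hgderiv : ∀ y, deriv g y = hill' y - hill' x := fun y => (hg y).deriv
  have hpos : ∀ y, Real.cosh x < Real.cosh y → 0 < hill' y - hill' x := by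
    intro y h
    have hx' := Real.cosh_pos x
    have hy' := Real.cosh_pos y
    have : hill' y - hill' x = (Real.cosh y - Real.cosh x) / (Real.cosh x * Real.cosh y) := by
      simp only [hill']
      field_simp
      ring
    rw [this]
    exact div_pos (by linarith) (by positivity)
  have hneg : ∀ y, Real.cosh y < Real.cosh x → hill' y - hill' x < 0 := by
    intro y h
    have hx' := Real.cosh_pos x
    have hy' := Real.cosh_pos y
    have : hill' y - hill' x = (Real.cosh y - Real.cosh x) / (Real.cosh x * Real.cosh y) := by
      simp only [hill']
      field_simp
      ring
    rw [this]
    exact div_neg_of_neg_of_pos (by linarith) (by positivity)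
  -- strict monotonicity on pieces
  have mono1 : StrictMonoOn g (Iic (-x)) := by
    apply strictMonoOn_of_deriv_pos (convex_Iic _) hgcont.continuousOn
    intro y hy
    rw [interior_Iic] at hy
    rw [hgderiv]
    apply hpos
    rw [Real.cosh_lt_cosh]
    rw [abs_of_pos hx, abs_of_neg (by linarith [hy.out] : y < 0)]
    linarith [hy.out]
  have anti : StrictAntiOn g (Icc (-x) x) := by
    apply strictAntiOn_of_deriv_neg (convex_Icc _ _) hgcont.continuousOn
    intro y hy
    rw [interior_Icc] at hy
    rw [hgderiv]
    apply hneg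
    rw [Real.cosh_lt_cosh, abs_of_pos hx, abs_lt]
    exact ⟨hy.1, hy.2⟩
  have mono2 : StrictMonoOn g (Ici x) := by
    apply strictMonoOn_of_deriv_pos (convex_Ici _) hgcont.continuousOn
    intro y hy
    rw [interior_Ici] at hy
    rw [hgderiv]
    apply hpos
    rw [Real.cosh_lt_cosh, abs_of_pos hx, abs_of_pos (hx.trans hy.out)]
    exact hy.out
  have hgx : g x = 0 := by simp [hgdef]
  have hgnegx : 0 < g (-x) := by
    have := anti (left_mem_Icc.mpr (by linarith)) (right_mem_Icc.mpr (by linarith))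
      (by linarith)
    rwa [hgx] at this
  -- point where g is negative
  set y₀ : ℝ := min (-x) (x - Real.pi * Real.cosh x) - 1 with hy₀def
  have hy₀lt : y₀ < -x := by
    have := min_le_left (-x) (x - Real.pi * Real.cosh x)
    linarith
  have hgy₀ : g y₀ < 0 := by
    have h1 : hill y₀ ≤ Real.pi := Real.arccos_le_pi _
    have h2 : 0 ≤ hill x := Real.arccos_nonneg _
    have hc := Real.cosh_pos x
    have h4 : y₀ - x < -(Real.pi * Real.cosh x) := by
      have := min_le_right (-x) (x - Real.pi * Real.cosh x)
      linarith
    have h3 : (y₀ - x) / Real.cosh x < -Real.pi := by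
      rw [div_lt_iff₀ hc]
      nlinarith
    have key : hill' x * (y₀ - x) = (y₀ - x) / Real.cosh x * (-1) := by
      rw [hill']
      ring
    have : g y₀ = hill y₀ - hill x + (y₀ - x) / Real.cosh x := by
      rw [hgdef]
      simp only
      rw [key]
      ring
    rw [this]
    linarith
  -- IVT
  obtain ⟨y, hymem, hgy⟩ : ∃ y ∈ Ioo y₀ (-x), g y = 0 := by
    have h := intermediate_value_Ioo (le_of_lt hy₀lt) hgcont.continuousOn
      (a := y₀) (b := -x)
    have h0 : (0 : ℝ) ∈ Ioo (g y₀) (g (-x)) := ⟨hgy₀, hgnegx⟩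
    obtain ⟨y, hy, hgy⟩ := h h0
    exact ⟨y, hy, hgy⟩
  have hyneg : y < 0 := by
    have := hymem.2
    linarith
  refine ⟨y, ⟨by linarith, ?_⟩, hyneg, ?_⟩
  · have := sub_eq_zero.mp hgy
    exact this
  · intro z hzx hz
    have hgz : g z = 0 := sub_eq_zero.mpr hz
    rcases lt_trichotomy z (-x) with h | h | h
    · exact mono1.injOn (le_of_lt h) (le_of_lt hymem.2) (hgz.trans hgy.symm)
    · exfalso
      rw [h] at hgz
      linarith
    · exfalso
      rcases lt_trichotomy z x with h2 | h2 | h2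
      · have := anti ⟨le_of_lt h, le_of_lt h2⟩ (right_mem_Icc.mpr (by linarith)) h2
        rw [hgx, hgz] at this
        exact lt_irrefl 0 this
      · exact hzx h2
      · have := mono2 (le_refl x) (le_of_lt h2) h2
        rw [hgx, hgz] at this
        exact lt_irrefl 0 this
end

section
/- If L > 0 and 2·tanh(L) > L, then the function j(x) = eˣ·sinh(L·e^{−x/2}) is strictly increasing on the interval [0, ∞); in particular j(x) ≥ sinh(L) for all x ≥ 0. -/
open Real Set

/-- `g t = 2 sinh t - t cosh t` is concave on `[0, ∞)`. -/
lemma concave_aux : ConcaveOn ℝ (Set.Ici (0 : ℝ))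
    (fun t : ℝ => 2 * Real.sinh t - t * Real.cosh t) := by
  apply concaveOn_of_hasDerivWithinAt2_nonpos (f' := fun t => Real.cosh t - t * Real.sinh t)
    (f'' := fun t => -(t * Real.cosh t)) (convex_Ici 0)
  · exact (by continuity : Continuous fun t : ℝ => 2 * Real.sinh t - t * Real.cosh t).continuousOn
  · intro x hx
    have h1 : HasDerivAt (fun t : ℝ => 2 * Real.sinh t - t * Real.cosh t)
        (Real.cosh x - x * Real.sinh x) x := by
      have := ((Real.hasDerivAt_sinh x).const_mul 2).sub
        ((hasDerivAt_id x).mul (Real.hasDerivAt_cosh x))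
      refine this.congr_deriv ?_
      simp only [id]; ring
    exact h1.hasDerivWithinAt
  · intro x hx
    have h1 : HasDerivAt (fun t : ℝ => Real.cosh t - t * Real.sinh t)
        (-(x * Real.cosh x)) x := by
      have := (Real.hasDerivAt_cosh x).sub ((hasDerivAt_id x).mul (Real.hasDerivAt_sinh x))
      refine this.congr_deriv ?_
      simp only [id]; ring
    exact h1.hasDerivWithinAt
  · intro x hx
    rw [interior_Ici] at hx
    have : 0 ≤ x * Real.cosh x := mul_nonneg (le_of_lt hx) (Real.cosh_pos x).le
    linarith

/-- Key inequality: if `0 < u ≤ L` and `L < 2 tanh L`, then `u cosh u < 2 sinh u`. -/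
lemma key_aux {L u : ℝ} (hL : 0 < L) (hL' : L < 2 * Real.tanh L)
    (hu : 0 < u) (huL : u ≤ L) : u * Real.cosh u < 2 * Real.sinh u := by
  have hcL : 0 < Real.cosh L := Real.cosh_pos L
  have hgL : 0 < 2 * Real.sinh L - L * Real.cosh L := by
    rw [Real.tanh_eq_sinh_div_cosh] at hL'
    have := (lt_div_iff₀ hcL).mp (by linarith [hL'] : L / 2 < Real.sinh L / Real.cosh L)
    nlinarith
  rcases eq_or_lt_of_le huL with rfl | hlt
  · linarith
  · -- use concavity: u = (1 - u/L)•0 + (u/L)•L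
    have ha : (0:ℝ) ≤ 1 - u / L := by
      have : u / L ≤ 1 := (div_le_one hL).mpr huL
      linarith
    have hb : (0:ℝ) ≤ u / L := by positivity
    have hab : (1 - u / L) + u / L = 1 := by ring
    have hconc := concave_aux.2 (Set.self_mem_Ici)
      (Set.mem_Ici.mpr (le_of_lt hL : (0:ℝ) ≤ L)) ha hb hab
    simp only [smul_eq_mul] at hconc
    have hu' : (1 - u / L) * 0 + u / L * L = u := by field_simp; ring
    rw [hu'] at hconc
    have hbpos : 0 < u / L := by positivity
    nlinarith [Real.sinh_zero, Real.cosh_zero]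

/-- If `L > 0` and `2 tanh L > L`, then `j(x) = eˣ sinh (L e^{-x/2})` is strictly
increasing on `[0, ∞)`; in particular `j(x) ≥ sinh L` for all `x ≥ 0`. -/
theorem strictMonoOn_exp_mul_sinh {L : ℝ} (hL : 0 < L) (hL' : L < 2 * Real.tanh L) :
    StrictMonoOn (fun x : ℝ => Real.exp x * Real.sinh (L * Real.exp (-x / 2)))
      (Set.Ici (0 : ℝ)) ∧
    ∀ x : ℝ, 0 ≤ x → Real.sinh L ≤ Real.exp x * Real.sinh (L * Real.exp (-x / 2)) := by
  have hderiv : ∀ x : ℝ, HasDerivAt (fun x : ℝ => Real.exp x * Real.sinh (L * Real.exp (-x / 2)))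
      (Real.exp x * Real.sinh (L * Real.exp (-x / 2)) +
        Real.exp x * (Real.cosh (L * Real.exp (-x / 2)) * (L * (Real.exp (-x / 2) * (-1 / 2))))) x := by
    intro x
    have h1 : HasDerivAt (fun x : ℝ => -x / 2) (-1 / 2 : ℝ) x := by
      simpa using (hasDerivAt_id x).neg.div_const 2
    have h2 : HasDerivAt (fun x : ℝ => Real.exp (-x / 2)) (Real.exp (-x / 2) * (-1 / 2)) x :=
      h1.exp
    have h3 : HasDerivAt (fun x : ℝ => L * Real.exp (-x / 2))
        (L * (Real.exp (-x / 2) * (-1 / 2))) x := h2.const_mul L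
    have h4 : HasDerivAt (fun x : ℝ => Real.sinh (L * Real.exp (-x / 2)))
        (Real.cosh (L * Real.exp (-x / 2)) * (L * (Real.exp (-x / 2) * (-1 / 2)))) x :=
      (Real.hasDerivAt_sinh _).comp x h3
    exact (Real.hasDerivAt_exp x).mul h4
  have hmono : StrictMonoOn (fun x : ℝ => Real.exp x * Real.sinh (L * Real.exp (-x / 2)))
      (Set.Ici (0 : ℝ)) := by
    apply strictMonoOn_of_deriv_pos (convex_Ici 0)
    · exact Continuous.continuousOn (by continuity)
    · intro x hx
      rw [interior_Ici, Set.mem_Ioi] at hx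
      rw [(hderiv x).deriv]
      set u : ℝ := L * Real.exp (-x / 2) with hu
      have hupos : 0 < u := mul_pos hL (Real.exp_pos _)
      have huL : u ≤ L := by
        have : Real.exp (-x / 2) ≤ 1 := Real.exp_le_one_iff.mpr (by linarith)
        nlinarith
      have hkey := key_aux hL hL' hupos huL
      have hex : 0 < Real.exp x := Real.exp_pos x
      have : Real.exp x * Real.sinh u +
          Real.exp x * (Real.cosh u * (L * (Real.exp (-x / 2) * (-1 / 2)))) =
          Real.exp x / 2 * (2 * Real.sinh u - u * Real.cosh u) := by
        rw [hu]; ring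
      rw [this]
      exact mul_pos (by positivity) (by linarith)
  refine ⟨hmono, fun x hx => ?_⟩
  have h0 : Real.exp (0 : ℝ) * Real.sinh (L * Real.exp (-(0 : ℝ) / 2)) = Real.sinh L := by
    norm_num
  calc Real.sinh L = Real.exp (0 : ℝ) * Real.sinh (L * Real.exp (-(0 : ℝ) / 2)) := h0.symm
    _ ≤ Real.exp x * Real.sinh (L * Real.exp (-x / 2)) :=
        hmono.monotoneOn Set.self_mem_Ici (Set.mem_Ici.mpr hx) hx
end

section
/- If L > 0 and 2·tanh(L) > L, then for every real x one has arcsinh(e^{−|x|}·sinh(L)) ≤ L·e^{−|x|/2}; equivalently, g(L, x) := max(L·e^{−|x|/2}, arcsinh(e^{−|x|}·sinh(L))) = L·e^{−|x|/2} for all x. -/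
open Real Set

private lemma cosh_comb (p q l m : ℝ) (hl : 0 ≤ l) (hm : 0 ≤ m) (hlm : l + m = 1) :
    Real.cosh (l * p + m * q) ≤ l * Real.cosh p + m * Real.cosh q := by
  have h1 := convexOn_exp.2 (Set.mem_univ p) (Set.mem_univ q) hl hm hlm
  have h2 := convexOn_exp.2 (Set.mem_univ (-p)) (Set.mem_univ (-q)) hl hm hlm
  simp only [smul_eq_mul] at h1 h2
  have h2' : Real.exp (-(l * p + m * q)) ≤ l * Real.exp (-p) + m * Real.exp (-q) := by
    rw [show -(l * p + m * q) = l * (-p) + m * (-q) by ring]; exact h2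
  rw [Real.cosh_eq, Real.cosh_eq, Real.cosh_eq]
  linarith

private lemma key_ineq {L : ℝ} (hL : 0 < L) (hL' : L < 2 * Real.tanh L)
    {s : ℝ} (hs0 : 0 ≤ s) (hs1 : s ≤ 1) :
    s ^ 2 * Real.sinh L ≤ Real.sinh (s * L) := by
  have hcoshL := Real.cosh_pos L
  have hC : L * Real.cosh L - 2 * Real.sinh L < 0 := by
    rw [Real.tanh_eq_sinh_div_cosh] at hL'
    have h2 : 2 * (Real.sinh L / Real.cosh L) * Real.cosh L = 2 * Real.sinh L := by
      field_simp
    nlinarith [mul_lt_mul_of_pos_right hL' hcoshL]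
  rcases eq_or_lt_of_le hs0 with h0 | h0
  · simp [← h0]
  rcases eq_or_lt_of_le hs1 with h1 | h1
  · simp [h1]
  set f : ℝ → ℝ := fun t => Real.sinh (t * L) - t ^ 2 * Real.sinh L with hfdef
  have hf : ∀ t, HasDerivAt f (L * Real.cosh (t * L) - 2 * t * Real.sinh L) t := by
    intro t
    have h1 : HasDerivAt (fun t : ℝ => Real.sinh (t * L)) (Real.cosh (t * L) * L) t := by
      simpa [Function.comp_def] using (Real.hasDerivAt_sinh (t * L)).comp t ((hasDerivAt_id t).mul_const L)
    have h2 : HasDerivAt (fun t : ℝ => t ^ 2 * Real.sinh L) (2 * t * Real.sinh L) t := by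
      simpa [mul_comm] using (hasDerivAt_pow 2 t).mul_const (Real.sinh L)
    have := h1.sub h2
    refine this.congr_deriv ?_
    ring
  have hdf : Differentiable ℝ f := fun t => (hf t).differentiableAt
  by_contra hcon
  push_neg at hcon
  have hfs : f s < 0 := by simpa [hfdef] using sub_neg.2 hcon
  have hf0 : f 0 = 0 := by simp [hfdef]
  have hf1 : f 1 = 0 := by simp [hfdef]
  obtain ⟨a, ha, hda⟩ := exists_deriv_eq_slope f h0 hdf.continuous.continuousOn
    hdf.differentiableOn
  obtain ⟨b, hb, hdb⟩ := exists_deriv_eq_slope f h1 hdf.continuous.continuousOn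
    hdf.differentiableOn
  rw [(hf a).deriv] at hda
  rw [(hf b).deriv] at hdb
  have hA : L * Real.cosh (a * L) - 2 * a * Real.sinh L < 0 := by
    rw [hda, hf0, sub_zero, sub_zero]
    exact div_neg_of_neg_of_pos hfs h0
  have hB : 0 < L * Real.cosh (b * L) - 2 * b * Real.sinh L := by
    rw [hdb, hf1, zero_sub]
    exact div_pos (by linarith) (by linarith [hb.1, hb.2])
  obtain ⟨has, hsb⟩ := ha
  obtain ⟨hsb', hb1⟩ := hb
  have hab : a < b := hsb.trans hsb'
  have ha1 : a < 1 := hab.trans hb1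
  set l : ℝ := (1 - b) / (1 - a) with hl_def
  set m : ℝ := (b - a) / (1 - a) with hm_def
  have h1a : (0:ℝ) < 1 - a := by linarith
  have hl : 0 ≤ l := div_nonneg (by linarith) h1a.le
  have hm : 0 ≤ m := div_nonneg (by linarith) h1a.le
  have hlm : l + m = 1 := by rw [hl_def, hm_def]; field_simp; ring
  have hbl : b * L = l * (a * L) + m * L := by rw [hl_def, hm_def]; field_simp; ring
  have hla : l * a + m = b := by rw [hl_def, hm_def]; field_simp; ring
  have hcb : Real.cosh (b * L) ≤ l * Real.cosh (a * L) + m * Real.cosh L := by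
    rw [hbl]; exact cosh_comb _ _ _ _ hl hm hlm
  have h5 : L * Real.cosh (b * L) ≤ l * (L * Real.cosh (a * L)) + m * (L * Real.cosh L) := by
    nlinarith
  have h6 : l * (L * Real.cosh (a * L) - 2 * a * Real.sinh L) ≤ 0 :=
    mul_nonpos_of_nonneg_of_nonpos hl hA.le
  have h7 : m * (L * Real.cosh L - 2 * Real.sinh L) ≤ 0 :=
    mul_nonpos_of_nonneg_of_nonpos hm hC.le
  have h8 : (l * a + m) * Real.sinh L = b * Real.sinh L := by rw [hla]
  nlinarith [h5, h6, h7, h8, hB]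

/-- If `L > 0` and `2 tanh L > L`, then for all real `x`,
`arcsinh (e^{-|x|} sinh L) ≤ L e^{-|x|/2}`; equivalently
`g(L, x) = max (L e^{-|x|/2}) (arcsinh (e^{-|x|} sinh L)) = L e^{-|x|/2}`. -/
theorem g_eq_of_two_tanh_gt {L : ℝ} (hL : 0 < L) (hL' : L < 2 * Real.tanh L) :
    ∀ x : ℝ,
      Real.arsinh (Real.exp (-|x|) * Real.sinh L) ≤ L * Real.exp (-|x| / 2) ∧
      max (L * Real.exp (-|x| / 2)) (Real.arsinh (Real.exp (-|x|) * Real.sinh L))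
        = L * Real.exp (-|x| / 2) := by
  intro x
  set s : ℝ := Real.exp (-|x| / 2) with hs_def
  have hs0 : 0 < s := Real.exp_pos _
  have hs1 : s ≤ 1 := Real.exp_le_one_iff.2 (by rw [neg_div]; exact neg_nonpos.2 (by positivity))
  have hsq : s ^ 2 = Real.exp (-|x|) := by
    rw [hs_def, sq, ← Real.exp_add]; congr 1; ring
  have hkey := key_ineq hL hL' hs0.le hs1
  rw [hsq] at hkey
  have h := Real.arsinh_le_arsinh.2 hkey
  rw [Real.arsinh_sinh] at h
  have h' : Real.arsinh (Real.exp (-|x|) * Real.sinh L) ≤ L * s := by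
    rw [mul_comm L s]; exact h
  exact ⟨h', max_eq_left h'⟩
end

section
/- For every L > 0 and every real x, setting g := max(L·e^{−|x|/2}, arcsinh(e^{−|x|}·sinh(L))), one has min(g·e^{|x|/2}, arcsinh(e^{|x|}·sinh(g))) = L; that is, f(g(L, x), x) = L, where f(A, x) = min(A·e^{|x|/2}, arcsinh(e^{|x|}·sinh(A))). -/
/-- For every `L > 0` and every real `x`, with
`g = max (L e^{-|x|/2}) (arcsinh (e^{-|x|} sinh L))`, one has
`min (g e^{|x|/2}) (arcsinh (e^{|x|} sinh g)) = L`; that is, `f (g (L, x), x) = L`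
where `f(A, x) = min (A e^{|x|/2}) (arcsinh (e^{|x|} sinh A))`. -/
theorem f_g_eq {L : ℝ} (hL : 0 < L) (x : ℝ) :
    min ((max (L * Real.exp (-|x| / 2))
            (Real.arsinh (Real.exp (-|x|) * Real.sinh L))) * Real.exp (|x| / 2))
        (Real.arsinh (Real.exp |x| *
          Real.sinh (max (L * Real.exp (-|x| / 2))
            (Real.arsinh (Real.exp (-|x|) * Real.sinh L)))))
      = L := by
  set t := |x| with ht
  have hmul : L * Real.exp (-t / 2) * Real.exp (t / 2) = L := by
    have h0 : -t / 2 + t / 2 = 0 := by ring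
    rw [mul_assoc, ← Real.exp_add, h0, Real.exp_zero, mul_one]
  have hee : Real.exp t * Real.exp (-t) = 1 := by
    rw [← Real.exp_add]; norm_num
  rcases le_total (Real.arsinh (Real.exp (-t) * Real.sinh L)) (L * Real.exp (-t / 2)) with h | h
  · rw [max_eq_left h, hmul]
    apply min_eq_left
    have h1 : Real.exp (-t) * Real.sinh L ≤ Real.sinh (L * Real.exp (-t / 2)) := by
      have := Real.sinh_le_sinh.mpr h
      rwa [Real.sinh_arsinh] at this
    have h2 : Real.sinh L ≤ Real.exp t * Real.sinh (L * Real.exp (-t / 2)) := by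
      have := mul_le_mul_of_nonneg_left h1 (Real.exp_pos t).le
      calc Real.sinh L = Real.exp t * (Real.exp (-t) * Real.sinh L) := by
            rw [← mul_assoc, hee, one_mul]
        _ ≤ _ := this
    calc L = Real.arsinh (Real.sinh L) := (Real.arsinh_sinh L).symm
      _ ≤ _ := Real.arsinh_le_arsinh.mpr h2
  · rw [max_eq_right h]
    have h1 : Real.arsinh (Real.exp t *
        Real.sinh (Real.arsinh (Real.exp (-t) * Real.sinh L))) = L := by
      rw [Real.sinh_arsinh, ← mul_assoc, hee, one_mul, Real.arsinh_sinh]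
    rw [h1]
    apply min_eq_right
    calc L = L * Real.exp (-t / 2) * Real.exp (t / 2) := hmul.symm
      _ ≤ _ := by
          apply mul_le_mul_of_nonneg_right h (Real.exp_pos _).le
end

section
/- Let c be the unique real solution of h(c − 1.48) = h(c) − 1.48·h′(c). Then 1.327 < h(c − 1.48) − h(c) < 1.328; that is, G(1.48) ≈ 1.327185. -/
lemma tanh_sq_lt_one (x : ℝ) : Real.tanh x ^ 2 < 1 := by
  have h1 := Real.cosh_pos x
  have h2 : Real.cosh x ^ 2 - Real.sinh x ^ 2 = 1 := Real.cosh_sq_sub_sinh_sq x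
  rw [Real.tanh_eq_sinh_div_cosh, div_pow, div_lt_one (by positivity)]
  nlinarith

lemma hill_hasDerivAt_s16 (x : ℝ) : HasDerivAt hill (-1 / Real.cosh x) x := by
  have hsq := tanh_sq_lt_one x
  have hcosh := Real.cosh_pos x
  have h1 : Real.tanh x ≠ -1 := by nlinarith
  have h2 : Real.tanh x ≠ 1 := by nlinarith
  have htanh : HasDerivAt Real.tanh (1 / Real.cosh x ^ 2) x := by
    have h := (Real.hasDerivAt_sinh x).div (Real.hasDerivAt_cosh x) (ne_of_gt hcosh)
    have hnum : Real.cosh x * Real.cosh x - Real.sinh x * Real.sinh x = 1 := by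
      have := Real.cosh_sq_sub_sinh_sq x
      nlinarith
    rw [hnum] at h
    rw [show Real.tanh = fun y => Real.sinh y / Real.cosh y from funext Real.tanh_eq_sinh_div_cosh]
    exact h
  have harc := (Real.hasDerivAt_arccos h1 h2).comp x htanh
  have hs : Real.sqrt (1 - Real.tanh x ^ 2) = 1 / Real.cosh x := by
    have : 1 - Real.tanh x ^ 2 = (1 / Real.cosh x) ^ 2 := by
      rw [Real.tanh_eq_sinh_div_cosh, div_pow, div_pow]
      have h3 := Real.cosh_sq_sub_sinh_sq x
      field_simp
      linarith
    rw [this, Real.sqrt_sq (by positivity)]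
  have : hill = Real.arccos ∘ Real.tanh := rfl
  rw [this]
  refine harc.congr_deriv (Eq.symm ?_)
  rw [hs]
  field_simp

lemma hill_eq (x : ℝ) : hill x = 2 * Real.arctan (Real.exp (-x)) := by
  have key : ∀ y : ℝ, HasDerivAt (fun t => hill t - 2 * Real.arctan (Real.exp (-t))) 0 y := by
    intro y
    have h1 := hill_hasDerivAt_s16 y
    have he : HasDerivAt (fun t : ℝ => Real.exp (-t)) (-Real.exp (-y)) y := by
      exact ((Real.hasDerivAt_exp (-y)).comp y ((hasDerivAt_id y).neg)).congr_deriv (by simp)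
    have h2 := ((Real.hasDerivAt_arctan (Real.exp (-y))).comp y he).const_mul 2
    have h2' : HasDerivAt (fun t : ℝ => 2 * Real.arctan (Real.exp (-t))) (-1 / Real.cosh y) y := by
      refine h2.congr_deriv (Eq.symm ?_)
      rw [Real.cosh_eq]
      have h0 := Real.exp_pos y
      have h0' := Real.exp_pos (-y)
      rw [Real.exp_neg] at *
      field_simp
    exact (h1.sub h2').congr_deriv (sub_self _)
  have hconst := is_const_of_deriv_eq_zero (f := fun t => hill t - 2 * Real.arctan (Real.exp (-t)))
    (fun y => (key y).differentiableAt) (fun y => (key y).deriv) x 0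
  have h0 : hill 0 - 2 * Real.arctan (Real.exp (-0)) = 0 := by
    simp [hill, Real.tanh_zero, Real.arccos_zero, Real.arctan_one]
    ring
  have := hconst.trans h0
  linarith [this]

lemma poly_hasDerivAt (t : ℝ) :
    HasDerivAt (fun t : ℝ => t - t^3/3 + t^5/5 - t^7/7 + t^9/9 - t^11/11 + t^13/13 - t^15/15 + t^17/17 - t^19/19)
      (1 - t^2 + t^4 - t^6 + t^8 - t^10 + t^12 - t^14 + t^16 - t^18) t := by
  have h := (((((((((hasDerivAt_id' (x := t)).sub ((hasDerivAt_pow 3 t).div_const 3)).add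
    ((hasDerivAt_pow 5 t).div_const 5)).sub ((hasDerivAt_pow 7 t).div_const 7)).add
    ((hasDerivAt_pow 9 t).div_const 9)).sub ((hasDerivAt_pow 11 t).div_const 11)).add
    ((hasDerivAt_pow 13 t).div_const 13)).sub ((hasDerivAt_pow 15 t).div_const 15)).add
    ((hasDerivAt_pow 17 t).div_const 17)).sub ((hasDerivAt_pow 19 t).div_const 19)
  refine h.congr_deriv (Eq.symm ?_)
  push_cast
  ring

lemma arctan_ge_poly {q : ℝ} (hq : 0 ≤ q) :
    q - q^3/3 + q^5/5 - q^7/7 + q^9/9 - q^11/11 + q^13/13 - q^15/15 + q^17/17 - q^19/19 ≤ Real.arctan q := by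
  set f : ℝ → ℝ := fun t => Real.arctan t - (t - t^3/3 + t^5/5 - t^7/7 + t^9/9 - t^11/11 + t^13/13 - t^15/15 + t^17/17 - t^19/19) with hf
  have hd : ∀ t : ℝ, HasDerivAt f (1/(1+t^2) - (1 - t^2 + t^4 - t^6 + t^8 - t^10 + t^12 - t^14 + t^16 - t^18)) t :=
    fun t => (Real.hasDerivAt_arctan t).sub (poly_hasDerivAt t)
  have hdiff : Differentiable ℝ f := fun t => (hd t).differentiableAt
  have hmono : MonotoneOn f (Set.Icc 0 q) := by
    apply monotoneOn_of_deriv_nonneg (convex_Icc 0 q) hdiff.continuous.continuousOn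
      (hdiff.differentiableOn)
    intro t ht
    rw [(hd t).deriv]
    have h1 : (0:ℝ) < 1 + t^2 := by positivity
    rw [sub_nonneg, ← sub_nonneg, div_sub' (ne_of_gt h1)]
    apply div_nonneg _ (le_of_lt h1)
    nlinarith [pow_nonneg (sq_nonneg t) 10, sq_nonneg t]
  have h0 : f 0 ≤ f q := by
    rcases eq_or_lt_of_le hq with h | h
    · rw [h]
    · exact hmono (Set.left_mem_Icc.mpr hq) (Set.right_mem_Icc.mpr hq) hq
  simp only [hf, Real.arctan_zero] at h0
  norm_num at h0
  linarith

lemma arctan_le_poly {q : ℝ} (hq : 0 ≤ q) :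
    Real.arctan q ≤ q - q^3/3 + q^5/5 - q^7/7 + q^9/9 - q^11/11 + q^13/13 - q^15/15 + q^17/17 - q^19/19 + q^21/21 := by
  set f : ℝ → ℝ := fun t => (t - t^3/3 + t^5/5 - t^7/7 + t^9/9 - t^11/11 + t^13/13 - t^15/15 + t^17/17 - t^19/19 + t^21/21) - Real.arctan t with hf
  have hd : ∀ t : ℝ, HasDerivAt f ((1 - t^2 + t^4 - t^6 + t^8 - t^10 + t^12 - t^14 + t^16 - t^18 + t^20) - 1/(1+t^2)) t := by
    intro t
    have hp := (poly_hasDerivAt t).add ((hasDerivAt_pow 21 t).div_const 21)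
    have hp' : HasDerivAt (fun t : ℝ => t - t^3/3 + t^5/5 - t^7/7 + t^9/9 - t^11/11 + t^13/13 - t^15/15 + t^17/17 - t^19/19 + t^21/21)
        (1 - t^2 + t^4 - t^6 + t^8 - t^10 + t^12 - t^14 + t^16 - t^18 + t^20) t := by
      refine hp.congr_deriv (Eq.symm ?_)
      push_cast
      ring
    exact hp'.sub (Real.hasDerivAt_arctan t)
  have hdiff : Differentiable ℝ f := fun t => (hd t).differentiableAt
  have hmono : MonotoneOn f (Set.Icc 0 q) := by
    apply monotoneOn_of_deriv_nonneg (convex_Icc 0 q) hdiff.continuous.continuousOn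
      (hdiff.differentiableOn)
    intro t ht
    rw [(hd t).deriv]
    have h1 : (0:ℝ) < 1 + t^2 := by positivity
    rw [sub_nonneg, div_le_iff₀ h1]
    nlinarith [pow_nonneg (sq_nonneg t) 11, sq_nonneg t]
  have h0 : f 0 ≤ f q := by
    rcases eq_or_lt_of_le hq with h | h
    · rw [h]
    · exact hmono (Set.left_mem_Icc.mpr hq) (Set.right_mem_Icc.mpr hq) hq
  simp only [hf, Real.arctan_zero] at h0
  norm_num at h0
  linarith

lemma exp_4746 : (1.60737112 : ℝ) < Real.exp 0.4746 ∧ Real.exp 0.4746 < 1.60737113 := by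
  have habs : |(0.4746:ℝ)| = 0.4746 := abs_of_nonneg (by norm_num)
  have h := Real.exp_bound (x := 0.4746) (by rw [habs]; norm_num) (n := 11) (by norm_num)
  have h' := abs_le.mp h
  simp only [Finset.sum_range_succ, Finset.sum_range_zero, habs] at h'
  norm_num [Nat.factorial] at h'
  constructor <;> nlinarith [h'.1, h'.2]

lemma exp_4756 : (1.60897929 : ℝ) < Real.exp 0.4756 ∧ Real.exp 0.4756 < 1.6089793 := by
  have habs : |(0.4756:ℝ)| = 0.4756 := abs_of_nonneg (by norm_num)
  have h := Real.exp_bound (x := 0.4756) (by rw [habs]; norm_num) (n := 11) (by norm_num)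
  have h' := abs_le.mp h
  simp only [Finset.sum_range_succ, Finset.sum_range_zero, habs] at h'
  norm_num [Nat.factorial] at h'
  constructor <;> nlinarith [h'.1, h'.2]

lemma exp_5054 : (1.65764844 : ℝ) < Real.exp 0.5054 ∧ Real.exp 0.5054 < 1.65764845 := by
  have habs : |(0.5054:ℝ)| = 0.5054 := abs_of_nonneg (by norm_num)
  have h := Real.exp_bound (x := 0.5054) (by rw [habs]; norm_num) (n := 11) (by norm_num)
  have h' := abs_le.mp h
  simp only [Finset.sum_range_succ, Finset.sum_range_zero, habs] at h'
  norm_num [Nat.factorial] at h'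
  constructor <;> nlinarith [h'.1, h'.2]

lemma exp_5044 : (1.65599162 : ℝ) < Real.exp 0.5044 ∧ Real.exp 0.5044 < 1.65599163 := by
  have habs : |(0.5044:ℝ)| = 0.5044 := abs_of_nonneg (by norm_num)
  have h := Real.exp_bound (x := 0.5044) (by rw [habs]; norm_num) (n := 11) (by norm_num)
  have h' := abs_le.mp h
  simp only [Finset.sum_range_succ, Finset.sum_range_zero, habs] at h'
  norm_num [Nat.factorial] at h'
  constructor <;> nlinarith [h'.1, h'.2]

lemma exp_half : (1.64872127 : ℝ) < Real.exp 0.5 ∧ Real.exp 0.5 < 1.64872128 := by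
  have habs : |(0.5:ℝ)| = 0.5 := abs_of_nonneg (by norm_num)
  have h := Real.exp_bound (x := 0.5) (by rw [habs]; norm_num) (n := 11) (by norm_num)
  have h' := abs_le.mp h
  simp only [Finset.sum_range_succ, Finset.sum_range_zero, habs] at h'
  norm_num [Nat.factorial] at h'
  constructor <;> nlinarith [h'.1, h'.2]

/-- `F(0.4746) < 0`. -/
lemma FA : hill (0.4746 - 1.48) - hill 0.4746 - 1.48 / Real.cosh 0.4746 < 0 := by
  obtain ⟨e1l, e1u⟩ := exp_4746
  obtain ⟨e3l, e3u⟩ := exp_5054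
  obtain ⟨e5l, e5u⟩ := exp_half
  have hep := Real.exp_pos (0.4746:ℝ)
  -- exp 1.0054 = exp 0.5054 * exp 0.5
  have hsplit : Real.exp 1.0054 = Real.exp 0.5054 * Real.exp 0.5 := by
    rw [← Real.exp_add]; norm_num
  have he14 : Real.exp 1.0054 < 1.65764845 * 1.64872128 := by
    rw [hsplit]
    have := Real.exp_pos (0.5054:ℝ)
    nlinarith
  have hepos := Real.exp_pos (1.0054:ℝ)
  -- hill (0.4746 - 1.48) = π - 2 arctan (exp (-1.0054))
  have hx : (0.4746:ℝ) - 1.48 = -1.0054 := by norm_num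
  have h1 : hill (0.4746 - 1.48) = Real.pi - 2 * Real.arctan (Real.exp (-1.0054)) := by
    rw [hx, hill_eq, neg_neg]
    have := Real.arctan_inv_of_pos hepos
    rw [Real.exp_neg]
    linarith [this]
  have h2 : hill (0.4746:ℝ) = 2 * Real.arctan (Real.exp (-0.4746)) := hill_eq _
  -- lower bound arctan (exp (-1.0054)) ≥ arctan 0.365898 ≥ 0.350767
  have hq1 : (0.365898 : ℝ) ≤ Real.exp (-1.0054) := by
    rw [Real.exp_neg]
    rw [le_inv_comm₀ (by norm_num) hepos]
    exact le_of_lt (lt_of_lt_of_le he14 (by norm_num))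
  have hA1 : (0.350767:ℝ) ≤ Real.arctan (Real.exp (-1.0054)) := by
    calc (0.350767:ℝ) ≤ (0.365898:ℝ) - 0.365898^3/3 + 0.365898^5/5 - 0.365898^7/7 + 0.365898^9/9
          - 0.365898^11/11 + 0.365898^13/13 - 0.365898^15/15 + 0.365898^17/17 - 0.365898^19/19 := by norm_num
      _ ≤ Real.arctan 0.365898 := arctan_ge_poly (by norm_num)
      _ ≤ Real.arctan (Real.exp (-1.0054)) := Real.arctan_strictMono.monotone hq1
  -- lower bound arctan (exp (-0.4746)) ≥ arctan 0.622133 ≥ 0.5565333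
  have hq2 : (0.622133 : ℝ) ≤ Real.exp (-0.4746) := by
    rw [Real.exp_neg, le_inv_comm₀ (by norm_num) hep]
    exact le_of_lt (lt_of_lt_of_le e1u (by norm_num))
  have hA2 : (0.5565333:ℝ) ≤ Real.arctan (Real.exp (-0.4746)) := by
    calc (0.5565333:ℝ) ≤ (0.622133:ℝ) - 0.622133^3/3 + 0.622133^5/5 - 0.622133^7/7 + 0.622133^9/9
          - 0.622133^11/11 + 0.622133^13/13 - 0.622133^15/15 + 0.622133^17/17 - 0.622133^19/19 := by norm_num
      _ ≤ Real.arctan 0.622133 := arctan_ge_poly (by norm_num)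
      _ ≤ Real.arctan (Real.exp (-0.4746)) := Real.arctan_strictMono.monotone hq2
  -- lower bound 1.48 / cosh 0.4746 ≥ 1.3276489
  have hc1 : Real.cosh (0.4746:ℝ) < (1.60737113 + (1.60737112:ℝ)⁻¹) / 2 := by
    rw [Real.cosh_eq, Real.exp_neg]
    have hinv : (Real.exp 0.4746)⁻¹ < (1.60737112:ℝ)⁻¹ := by
      apply inv_strictAnti₀ (by norm_num) e1l
    linarith
  have hsech : (1.3276489:ℝ) < 1.48 / Real.cosh 0.4746 := by
    have hcp := Real.cosh_pos (0.4746:ℝ)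
    rw [lt_div_iff₀ hcp]
    calc 1.3276489 * Real.cosh 0.4746 < 1.3276489 * ((1.60737113 + (1.60737112:ℝ)⁻¹) / 2) := by
          nlinarith
      _ ≤ 1.48 := by norm_num
  have hpi := Real.pi_lt_d6
  rw [h1, h2]
  linarith

/-- `F(0.4756) > 0`. -/
lemma FB : 0 < hill (0.4756 - 1.48) - hill 0.4756 - 1.48 / Real.cosh 0.4756 := by
  obtain ⟨e2l, e2u⟩ := exp_4756
  obtain ⟨e4l, e4u⟩ := exp_5044
  obtain ⟨e5l, e5u⟩ := exp_half
  have hep := Real.exp_pos (0.4756:ℝ)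
  have hsplit : Real.exp 1.0044 = Real.exp 0.5044 * Real.exp 0.5 := by
    rw [← Real.exp_add]; norm_num
  have he14 : (1.65599162:ℝ) * 1.64872127 < Real.exp 1.0044 := by
    rw [hsplit]
    have := Real.exp_pos (0.5044:ℝ)
    nlinarith
  have hepos := Real.exp_pos (1.0044:ℝ)
  have hx : (0.4756:ℝ) - 1.48 = -1.0044 := by norm_num
  have h1 : hill (0.4756 - 1.48) = Real.pi - 2 * Real.arctan (Real.exp (-1.0044)) := by
    rw [hx, hill_eq, neg_neg]
    have := Real.arctan_inv_of_pos hepos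
    rw [Real.exp_neg]
    linarith [this]
  have h2 : hill (0.4756:ℝ) = 2 * Real.arctan (Real.exp (-0.4756)) := hill_eq _
  -- upper bound arctan (exp (-1.0044)) ≤ arctan 0.366265 ≤ 0.3510907
  have hr1 : Real.exp (-1.0044) ≤ (0.366265 : ℝ) := by
    rw [Real.exp_neg, inv_le_comm₀ hepos (by norm_num)]
    exact le_of_lt (lt_of_le_of_lt (by norm_num) he14)
  have hA1 : Real.arctan (Real.exp (-1.0044)) ≤ (0.3510907:ℝ) := by
    calc Real.arctan (Real.exp (-1.0044)) ≤ Real.arctan 0.366265 :=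
          Real.arctan_strictMono.monotone hr1
      _ ≤ (0.366265:ℝ) - 0.366265^3/3 + 0.366265^5/5 - 0.366265^7/7 + 0.366265^9/9
          - 0.366265^11/11 + 0.366265^13/13 - 0.366265^15/15 + 0.366265^17/17 - 0.366265^19/19
          + 0.366265^21/21 := arctan_le_poly (by norm_num)
      _ ≤ 0.3510907 := by norm_num
  -- upper bound arctan (exp (-0.4756)) ≤ arctan 0.621513 ≤ 0.5560885
  have hr2 : Real.exp (-0.4756) ≤ (0.621513 : ℝ) := by
    rw [Real.exp_neg, inv_le_comm₀ hep (by norm_num)]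
    exact le_of_lt (lt_of_le_of_lt (by norm_num) e2l)
  have hA2 : Real.arctan (Real.exp (-0.4756)) ≤ (0.5560885:ℝ) := by
    calc Real.arctan (Real.exp (-0.4756)) ≤ Real.arctan 0.621513 :=
          Real.arctan_strictMono.monotone hr2
      _ ≤ (0.621513:ℝ) - 0.621513^3/3 + 0.621513^5/5 - 0.621513^7/7 + 0.621513^9/9
          - 0.621513^11/11 + 0.621513^13/13 - 0.621513^15/15 + 0.621513^17/17 - 0.621513^19/19
          + 0.621513^21/21 := arctan_le_poly (by norm_num)
      _ ≤ 0.5560885 := by norm_num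
  -- upper bound 1.48 / cosh 0.4756 ≤ 1.3270619
  have hc1 : (1.60897929 + (1.6089793:ℝ)⁻¹) / 2 < Real.cosh (0.4756:ℝ) := by
    rw [Real.cosh_eq, Real.exp_neg]
    have hinv : (1.6089793:ℝ)⁻¹ < (Real.exp 0.4756)⁻¹ := by
      apply inv_strictAnti₀ hep e2u
    linarith
  have hsech : 1.48 / Real.cosh 0.4756 < (1.3270619:ℝ) := by
    have hcp := Real.cosh_pos (0.4756:ℝ)
    rw [div_lt_iff₀ hcp]
    calc (1.48:ℝ) ≤ 1.3270619 * ((1.60897929 + (1.6089793:ℝ)⁻¹) / 2) := by norm_num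
      _ < 1.3270619 * Real.cosh 0.4756 := by nlinarith
  have hpi := Real.pi_gt_d6
  rw [h1, h2]
  linarith

lemma cosh_4746 : (185/166 : ℝ) < Real.cosh 0.4746 := by
  obtain ⟨e1l, e1u⟩ := exp_4746
  rw [Real.cosh_eq, Real.exp_neg]
  have hinv : (1.60737113:ℝ)⁻¹ < (Real.exp 0.4746)⁻¹ :=
    inv_strictAnti₀ (Real.exp_pos _) e1u
  have : (185/166:ℝ) < (1.60737112 + (1.60737113:ℝ)⁻¹) / 2 := by norm_num
  linarith

lemma cosh_4756 : Real.cosh 0.4756 < (1480/1327 : ℝ) := by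
  obtain ⟨e2l, e2u⟩ := exp_4756
  rw [Real.cosh_eq, Real.exp_neg]
  have hinv : (Real.exp 0.4756)⁻¹ < (1.60897929:ℝ)⁻¹ :=
    inv_strictAnti₀ (by norm_num) e2l
  have : (1.6089793 + (1.60897929:ℝ)⁻¹) / 2 < 1480/1327 := by norm_num
  linarith

/-- If `c` solves `h (c - 1.48) = h c - 1.48 * h' c`, then
`1.327 < h (c - 1.48) - h c < 1.328`; that is, `G(1.48) ≈ 1.327185`. -/
theorem hill_G_one_point_four_eight_approx {c : ℝ}
    (hc : hill (c - 1.48) = hill c - 1.48 * hill' c) :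
    1.327 < hill (c - 1.48) - hill c ∧ hill (c - 1.48) - hill c < 1.328 := by
  have hcoshc := Real.cosh_pos c
  have hdiff : hill (c - 1.48) - hill c = 1.48 / Real.cosh c := by
    rw [hc]
    unfold hill'
    ring
  -- Mean value theorem
  have hdiffble : Differentiable ℝ hill := fun x => (hill_hasDerivAt_s16 x).differentiableAt
  obtain ⟨ξ, hξmem, hslope⟩ := exists_hasDerivAt_eq_slope hill (fun x => -1 / Real.cosh x)
    (by linarith : c - 1.48 < c) hdiffble.continuous.continuousOn
    (fun x _ => hill_hasDerivAt_s16 x)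
  have hcoshξ := Real.cosh_pos ξ
  -- slope equals -1/cosh c
  have hcc : Real.cosh ξ = Real.cosh c := by
    have hden : c - (c - 1.48) = (1.48:ℝ) := by ring
    rw [hden] at hslope
    have : hill c - hill (c - 1.48) = -(1.48 / Real.cosh c) := by linarith [hdiff]
    rw [this] at hslope
    field_simp at hslope
    linarith
  have habs : |ξ| = |c| := by
    rcases lt_trichotomy |ξ| |c| with h | h | h
    · exact absurd (Real.cosh_lt_cosh.mpr h) (by rw [hcc]; exact lt_irrefl _)
    · exact h
    · exact absurd (Real.cosh_lt_cosh.mpr h) (by rw [hcc]; exact lt_irrefl _)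
  have hξlt : ξ < c := hξmem.2
  have hξeq : ξ = -c ∧ 0 < c := by
    rcases abs_eq_abs.mp habs with h | h
    · exact absurd h (ne_of_lt hξlt)
    · refine ⟨h, ?_⟩
      by_contra hcle
      push_neg at hcle
      have : -c ≤ ξ := by
        calc -c = ξ := h.symm
        _ ≤ ξ := le_refl _
      linarith [hξlt, h]
  obtain ⟨hξc, hcpos⟩ := hξeq
  have hclt : c < 0.74 := by
    have := hξmem.1
    rw [hξc] at this
    linarith
  -- F strictly monotone on [0, 0.74]
  set F : ℝ → ℝ := fun x => hill (x - 1.48) - hill x - 1.48 / Real.cosh x with hF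
  have hFd : ∀ x : ℝ, HasDerivAt F
      (-1 / Real.cosh (x - 1.48) - (-1 / Real.cosh x) - (-(1.48 * Real.sinh x) / Real.cosh x ^ 2)) x := by
    intro x
    have hA : HasDerivAt (fun x : ℝ => hill (x - 1.48)) (-1 / Real.cosh (x - 1.48) * 1) x :=
      (hill_hasDerivAt_s16 (x - 1.48)).comp (h₂ := hill) (h := fun x : ℝ => x - 1.48) x ((hasDerivAt_id x).sub_const (1.48:ℝ))
    have hB := hill_hasDerivAt_s16 x
    have hC : HasDerivAt (fun x : ℝ => 1.48 / Real.cosh x)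
        (-(1.48 * Real.sinh x) / Real.cosh x ^ 2) x := by
      have h := ((Real.hasDerivAt_cosh x).inv (ne_of_gt (Real.cosh_pos x))).const_mul (1.48:ℝ)
      refine h.congr_deriv (Eq.symm ?_)
      ring
    have := (hA.sub hB).sub hC
    refine this.congr_deriv (Eq.symm ?_)
    ring
  have hFdiffble : Differentiable ℝ F := fun x => (hFd x).differentiableAt
  have hmono : StrictMonoOn F (Set.Icc 0 0.74) := by
    apply strictMonoOn_of_deriv_pos (convex_Icc 0 0.74) hFdiffble.continuous.continuousOn
    intro x hx
    rw [interior_Icc, Set.mem_Ioo] at hx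
    rw [(hFd x).deriv]
    have hx1 : Real.cosh x < Real.cosh (x - 1.48) := by
      apply Real.cosh_lt_cosh.mpr
      rw [abs_of_pos hx.1, abs_of_neg (by linarith : x - 1.48 < 0)]
      linarith
    have hcx := Real.cosh_pos x
    have hcx2 := Real.cosh_pos (x - 1.48)
    have hsinh : 0 < Real.sinh x := Real.sinh_pos_iff.mpr hx.1
    have h1 : 1 / Real.cosh (x - 1.48) < 1 / Real.cosh x := by
      rw [div_lt_div_iff₀ hcx2 hcx]
      linarith
    have key : -1 / Real.cosh (x - 1.48) - (-1 / Real.cosh x) - (-(1.48 * Real.sinh x) / Real.cosh x ^ 2)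
        = (1 / Real.cosh x - 1 / Real.cosh (x - 1.48)) + (1.48 * Real.sinh x) / Real.cosh x ^ 2 := by
      ring
    rw [key]
    have h2 : 0 < (1.48 * Real.sinh x) / Real.cosh x ^ 2 := by positivity
    linarith
  -- F c = 0
  have hFc : F c = 0 := by
    simp only [hF]
    rw [hdiff]
    ring
  have hcmem : c ∈ Set.Icc (0:ℝ) 0.74 := ⟨le_of_lt hcpos, le_of_lt hclt⟩
  have hamem : (0.4746:ℝ) ∈ Set.Icc (0:ℝ) 0.74 := by norm_num
  have hbmem : (0.4756:ℝ) ∈ Set.Icc (0:ℝ) 0.74 := by norm_num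
  have hFa : F 0.4746 < 0 := FA
  have hFb : 0 < F 0.4756 := FB
  have hac : (0.4746:ℝ) < c := by
    by_contra h
    push_neg at h
    have h2 : F c ≤ F 0.4746 := hmono.monotoneOn hcmem hamem h
    have h3 := lt_of_le_of_lt h2 hFa
    rw [hFc] at h3
    exact absurd h3 (lt_irrefl 0)
  have hcb : c < (0.4756:ℝ) := by
    by_contra h
    push_neg at h
    have h2 : F 0.4756 ≤ F c := hmono.monotoneOn hbmem hcmem h
    rw [hFc] at h2
    exact absurd (lt_of_lt_of_le hFb h2) (lt_irrefl 0)
  -- cosh bounds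
  have hcosh_lt : Real.cosh c < Real.cosh 0.4756 := by
    apply Real.cosh_lt_cosh.mpr
    rw [abs_of_pos hcpos, abs_of_pos (by norm_num : (0:ℝ) < 0.4756)]
    exact hcb
  have hcosh_gt : Real.cosh 0.4746 < Real.cosh c := by
    apply Real.cosh_lt_cosh.mpr
    rw [abs_of_pos hcpos, abs_of_pos (by norm_num : (0:ℝ) < 0.4746)]
    exact hac
  have hub : Real.cosh c < 1480/1327 := lt_trans hcosh_lt cosh_4756
  have hlb : (185/166:ℝ) < Real.cosh c := lt_trans cosh_4746 hcosh_gt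
  rw [hdiff]
  constructor
  · rw [lt_div_iff₀ hcoshc]
    nlinarith
  · rw [div_lt_iff₀ hcoshc]
    nlinarith
end
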